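/- Let Γ be a finite group and consider a walk setup on Γ (symmetric primitive adjacency matrix A : Fin n → Fin n → ℕ with vertex labels t : Fin n → Γ) such that the set {t i : i : Fin n} generates Γ, and such that for every group homomorphism χ : Γ →* ℂˣ with χ not identically 1 there exist indices i, j with χ (t i) ≠ χ (t j). Let k ≥ 1 and let ρ : Γ →* Matrix.unitaryGroup (Fin k) ℂ be a unitary representation that is irreducible (the only ℂ-subspaces W of Fin k → ℂ with (ρ γ).mulVec v ∈ W for all γ ∈ Γ and v ∈ W are W = ⊥ and W = ⊤) and nontrivial (ρ γ ≠ 1 for some γ). Define the complex matrix B indexed by (Fin n) × (Fin k) by B ((i,a),(j,b)) = ((ρ (t i)) a b) · (A i j : ℂ). Then the spectral radius of B is strictly less than the spectral radius of the complex matrix (i,j) ↦ (A i j : ℂ). -/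

import Mathlib

open scoped BigOperators

open Matrix in
theorem unitary_norm_aux (k : ℕ) (U : Matrix (Fin k) (Fin k) ℂ)
    (hU : U ∈ Matrix.unitaryGroup (Fin k) ℂ) (x : Fin k → ℂ) :
    ‖(WithLp.equiv 2 (Fin k → ℂ)).symm (U.mulVec x)‖ = ‖(WithLp.equiv 2 (Fin k → ℂ)).symm x‖ := by
  have h1 : Uᴴ * U = 1 := by
    have := Matrix.mem_unitaryGroup_iff'.mp hU
    simpa [Matrix.star_eq_conjTranspose] using this
  have key : ∀ y : Fin k → ℂ, ‖(WithLp.equiv 2 (Fin k → ℂ)).symm y‖ ^ 2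
      = RCLike.re (dotProduct (star y) y) := by
    intro y
    rw [← inner_self_eq_norm_sq (𝕜 := ℂ)]
    rw [WithLp.equiv_symm_apply, EuclideanSpace.inner_toLp_toLp, dotProduct_comm]
  have h2 : dotProduct (star (U.mulVec x)) (U.mulVec x) = dotProduct (star x) x := by
    rw [Matrix.star_mulVec, dotProduct_mulVec, Matrix.vecMul_vecMul, h1,
      Matrix.vecMul_one]
  have h3 := key (U.mulVec x)
  rw [h2, ← key x] at h3
  have n1 : (0:ℝ) ≤ ‖(WithLp.equiv 2 (Fin k → ℂ)).symm (U.mulVec x)‖ := norm_nonneg _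
  have n2 : (0:ℝ) ≤ ‖(WithLp.equiv 2 (Fin k → ℂ)).symm x‖ := norm_nonneg _
  nlinarith

theorem sameRay_of_sum_aux {ι : Type*} [Fintype ι] {E : Type*} [NormedAddCommGroup E]
    [NormedSpace ℝ E] [StrictConvexSpace ℝ E] (f : ι → E)
    (h : ‖∑ i, f i‖ = ∑ i, ‖f i‖) (a b : ι) : SameRay ℝ (f a) (f b) := by
  classical
  rcases eq_or_ne a b with rfl | hab
  · exact SameRay.rfl
  rw [sameRay_iff_norm_add]
  have key : ‖f a + f b‖ + ∑ i ∈ (Finset.univ.erase a).erase b, ‖f i‖ ≥ ‖∑ i, f i‖ := by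
    calc ‖∑ i, f i‖ = ‖f a + f b + ∑ i ∈ (Finset.univ.erase a).erase b, f i‖ := by
          congr 1
          rw [add_assoc]
          rw [Finset.add_sum_erase _ f (Finset.mem_erase.mpr ⟨hab.symm, Finset.mem_univ b⟩)]
          rw [Finset.add_sum_erase _ f (Finset.mem_univ a)]
      _ ≤ ‖f a + f b‖ + ‖∑ i ∈ (Finset.univ.erase a).erase b, f i‖ := norm_add_le _ _
      _ ≤ ‖f a + f b‖ + ∑ i ∈ (Finset.univ.erase a).erase b, ‖f i‖ := by
          gcongr; exact norm_sum_le _ _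
  have hsplit : ∑ i, ‖f i‖ = ‖f a‖ + ‖f b‖ + ∑ i ∈ (Finset.univ.erase a).erase b, ‖f i‖ := by
    rw [add_assoc]
    rw [Finset.add_sum_erase _ (fun i => ‖f i‖) (Finset.mem_erase.mpr ⟨hab.symm, Finset.mem_univ b⟩)]
    rw [Finset.add_sum_erase _ (fun i => ‖f i‖) (Finset.mem_univ a)]
  have hle : ‖f a + f b‖ ≤ ‖f a‖ + ‖f b‖ := norm_add_le _ _
  rw [h, hsplit] at key
  linarith

open Matrix in
theorem perron_exists_aux (n : ℕ) (hn : 1 ≤ n) (M : Matrix (Fin n) (Fin n) ℝ)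
    (hsym : M.IsHermitian) (hpos : ∀ i j, 0 ≤ M i j) :
    ∃ (r : ℝ) (w : Fin n → ℝ), (∀ i, 0 ≤ w i) ∧ w ≠ 0 ∧ M.mulVec w = r • w := by
  classical
  set E := EuclideanSpace ℝ (Fin n)
  have hsymm : (Matrix.toEuclideanLin M).IsSymmetric :=
    Matrix.isHermitian_iff_isSymmetric.mp hsym
  set T : E →L[ℝ] E := LinearMap.toContinuousLinearMap (Matrix.toEuclideanLin M) with hT
  have hTsa : IsSelfAdjoint T := hsymm.toSelfAdjoint.prop
  have hx : (EuclideanSpace.single (⟨0, hn⟩ : Fin n) (1:ℝ) : E) ∈ Metric.sphere (0:E) 1 := by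
    simp [EuclideanSpace.norm_single]
  have H₁ : IsCompact (Metric.sphere (0:E) 1) := isCompact_sphere _ _
  have H₂ : (Metric.sphere (0:E) 1).Nonempty := ⟨_, hx⟩
  obtain ⟨x₀, hx₀mem, hmax⟩ :=
    H₁.exists_isMaxOn H₂ T.reApplyInnerSelf_continuous.continuousOn
  have hnx₀ : ‖x₀‖ = 1 := by simpa using hx₀mem
  have hx₀ne : x₀ ≠ 0 := by intro h; rw [h] at hnx₀; simp at hnx₀
  set y : E := (WithLp.equiv 2 (Fin n → ℝ)).symm (fun i => |WithLp.equiv 2 (Fin n → ℝ) x₀ i|)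
    with hy
  have hny : ‖y‖ = 1 := by
    rw [← hnx₀]
    rw [EuclideanSpace.norm_eq, EuclideanSpace.norm_eq]
    congr 1
    apply Finset.sum_congr rfl
    intro i _
    simp [hy, sq_abs]
  have hyne : y ≠ 0 := by intro h; rw [h] at hny; simp at hny
  have hymem : y ∈ Metric.sphere (0:E) 1 := by simp [hny]
  have hquad : ∀ z : E, T.reApplyInnerSelf z =
      ∑ i, (∑ j, M i j * WithLp.equiv 2 (Fin n → ℝ) z j) * WithLp.equiv 2 (Fin n → ℝ) z i := by
    intro z
    rw [ContinuousLinearMap.reApplyInnerSelf]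
    have : T z = Matrix.toEuclideanLin M z := rfl
    rw [this]
    rw [EuclideanSpace.inner_eq_star_dotProduct]
    rw [Matrix.ofLp_toEuclideanLin_apply]
    simp [dotProduct, Matrix.mulVec, mul_comm]
  have hmaxy : IsMaxOn T.reApplyInnerSelf (Metric.sphere (0:E) 1) y := by
    intro z hz
    have h1 : T.reApplyInnerSelf z ≤ T.reApplyInnerSelf x₀ := hmax hz
    have h2 : T.reApplyInnerSelf x₀ ≤ T.reApplyInnerSelf y := by
      rw [hquad, hquad]
      have hywp : ∀ i, WithLp.equiv 2 (Fin n → ℝ) y i = |WithLp.equiv 2 (Fin n → ℝ) x₀ i| := by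
        intro i; rw [hy]; simp
      calc ∑ i, (∑ j, M i j * WithLp.equiv 2 (Fin n → ℝ) x₀ j) * WithLp.equiv 2 (Fin n → ℝ) x₀ i
          ≤ ∑ i, (∑ j, M i j * |WithLp.equiv 2 (Fin n → ℝ) x₀ j|) * |WithLp.equiv 2 (Fin n → ℝ) x₀ i| := by
            apply Finset.sum_le_sum
            intro i _
            rw [Finset.sum_mul, Finset.sum_mul]
            apply Finset.sum_le_sum
            intro j _
            calc M i j * WithLp.equiv 2 (Fin n → ℝ) x₀ j * WithLp.equiv 2 (Fin n → ℝ) x₀ i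
                ≤ |M i j * WithLp.equiv 2 (Fin n → ℝ) x₀ j * WithLp.equiv 2 (Fin n → ℝ) x₀ i| :=
                  le_abs_self _
              _ = M i j * |WithLp.equiv 2 (Fin n → ℝ) x₀ j| * |WithLp.equiv 2 (Fin n → ℝ) x₀ i| := by
                  rw [abs_mul, abs_mul, abs_of_nonneg (hpos i j)]
        _ = ∑ i, (∑ j, M i j * WithLp.equiv 2 (Fin n → ℝ) y j) * WithLp.equiv 2 (Fin n → ℝ) y i := by
            simp_rw [hywp]
    exact le_trans h1 h2
  have hmaxy' : IsMaxOn T.reApplyInnerSelf (Metric.sphere (0:E) ‖y‖) y := by rwa [hny]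
  have hev := IsSelfAdjoint.hasEigenvector_of_isMaxOn hTsa hyne hmaxy'
  set r : ℝ := ⨆ x : { x : E // x ≠ 0 }, T.rayleighQuotient x with hrdef
  have heig : Matrix.toEuclideanLin M y = r • y := by
    have := hev.apply_eq_smul
    exact this
  refine ⟨r, fun i => |WithLp.equiv 2 (Fin n → ℝ) x₀ i|, fun i => abs_nonneg _, ?_, ?_⟩
  · intro h
    apply hyne
    rw [hy]
    rw [h]
    simp
  · have := congrArg (WithLp.equiv 2 (Fin n → ℝ)) heig
    change M *ᵥ WithLp.equiv 2 (Fin n → ℝ) y = _ at this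
    have h2 : WithLp.equiv 2 (Fin n → ℝ) y = fun i => |WithLp.equiv 2 (Fin n → ℝ) x₀ i| := by
      rw [hy]; simp
    rw [h2] at this
    rw [this]
    rw [← h2]
    rfl

set_option maxHeartbeats 2000000 in
/-- for a nontrivial irreducible unitary representation `ρ`, the
spectral radius of the twisted adjacency matrix is strictly smaller than the
spectral radius of the adjacency matrix. -/
theorem stmt2 {Γ : Type*} [Group Γ] [Fintype Γ]
    (n : ℕ) (hn : 1 ≤ n) (A : Fin n → Fin n → ℕ) (t : Fin n → Γ)
    (hsymm : ∀ i j, A i j = A j i)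
    (hprim : ∃ k, 1 ≤ k ∧ ∀ i j, 0 < ((Matrix.of A) ^ k) i j)
    (hgen : Subgroup.closure (Set.range t) = ⊤)
    (hchi : ∀ χ : Γ →* ℂˣ, (∃ γ, χ γ ≠ 1) → ∃ i j, χ (t i) ≠ χ (t j))
    (k : ℕ) (hk : 1 ≤ k)
    (ρ : Γ →* Matrix.unitaryGroup (Fin k) ℂ)
    (hirr : ∀ W : Submodule ℂ (Fin k → ℂ),
      (∀ γ : Γ, ∀ v ∈ W, ((ρ γ : Matrix (Fin k) (Fin k) ℂ)).mulVec v ∈ W) →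
        W = ⊥ ∨ W = ⊤)
    (hnontriv : ∃ γ : Γ, ρ γ ≠ 1) :
    spectralRadius ℂ
        (Matrix.of fun p q : Fin n × Fin k =>
          ((ρ (t p.1) : Matrix (Fin k) (Fin k) ℂ) p.2 q.2) * (A p.1 q.1 : ℂ))
      < spectralRadius ℂ (Matrix.of fun i j : Fin n => (A i j : ℂ)) := by
  classical
  obtain ⟨m, hm1, hmpos⟩ := hprim
  set B : Matrix (Fin n × Fin k) (Fin n × Fin k) ℂ :=
    Matrix.of (fun p q : Fin n × Fin k =>
      ((ρ (t p.1) : Matrix (Fin k) (Fin k) ℂ) p.2 q.2) * (A p.1 q.1 : ℂ)) with hB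
  set M : Matrix (Fin n) (Fin n) ℂ := Matrix.of (fun i j : Fin n => (A i j : ℂ)) with hM
  set Ar : Matrix (Fin n) (Fin n) ℝ := Matrix.of (fun i j => (A i j : ℝ)) with hAr
  have hArsym : Ar.IsHermitian := by
    ext i j
    simp only [Matrix.conjTranspose_apply, hAr, Matrix.of_apply, star_trivial]
    exact_mod_cast hsymm j i
  have hArnonneg : ∀ i j, (0:ℝ) ≤ Ar i j := by
    intro i j; simp [hAr]
  -- powers of Ar are casts of powers of A
  have hArpow : ∀ s : ℕ, Ar ^ s = Matrix.of (fun i j => ((((Matrix.of A) ^ s) i j : ℕ) : ℝ)) := by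
    intro s
    induction s with
    | zero =>
      ext i j
      by_cases h : i = j <;> simp [Matrix.one_apply, h]
    | succ s ih =>
      rw [pow_succ, pow_succ, ih]
      ext i j
      simp [Matrix.mul_apply, hAr]
  obtain ⟨r, w, hw0, hwne, hAw⟩ := perron_exists_aux n hn Ar hArsym hArnonneg
  have hAws : ∀ s : ℕ, (Ar ^ s).mulVec w = (r ^ s) • w := by
    intro s
    induction s with
    | zero => simp
    | succ s ih =>
      rw [pow_succ, ← Matrix.mulVec_mulVec, hAw, Matrix.mulVec_smul, ih, pow_succ,
        smul_smul, mul_comm]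
  obtain ⟨j0, hj0⟩ : ∃ j0, 0 < w j0 := by
    by_contra hcon
    push_neg at hcon
    exact hwne (funext fun i => le_antisymm (hcon i) (hw0 i))
  have hwpos : ∀ i, 0 < w i := by
    intro i
    have h1 : ((Ar ^ m).mulVec w) i = r ^ m * w i := by rw [hAws]; rfl
    have h2 : (0:ℝ) < ((Ar ^ m).mulVec w) i := by
      have : ((Ar ^ m).mulVec w) i = ∑ j, (Ar ^ m) i j * w j := rfl
      rw [this]
      have hterm : (0:ℝ) < (Ar ^ m) i j0 * w j0 := by
        apply mul_pos _ hj0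
        rw [hArpow]
        simp only [Matrix.of_apply]
        exact_mod_cast hmpos i j0
      apply lt_of_lt_of_le hterm
      apply Finset.single_le_sum (f := fun j => (Ar ^ m) i j * w j) _ (Finset.mem_univ j0)
      intro j _
      apply mul_nonneg _ (hw0 j)
      rw [hArpow]
      simp only [Matrix.of_apply]
      positivity
    rcases lt_or_eq_of_le (hw0 i) with h | h
    · exact h
    · exfalso; rw [h1, ← h] at h2; simp at h2
  have hrow : ∀ i, ∃ j, 0 < A i j := by
    intro i
    obtain ⟨m', rfl⟩ : ∃ m', m = m' + 1 := ⟨m - 1, (Nat.succ_pred_eq_of_pos hm1).symm⟩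
    have := hmpos i i
    rw [pow_succ'] at this
    by_contra hcon
    push_neg at hcon
    have : ((Matrix.of A) * (Matrix.of A) ^ m') i i = 0 := by
      rw [Matrix.mul_apply]
      apply Finset.sum_eq_zero
      intro j _
      have : A i j = 0 := Nat.le_zero.mp (hcon j)
      simp [Matrix.of_apply] at this ⊢
      left; exact this
    omega
  have hrpos : 0 < r := by
    obtain ⟨j1, hj1⟩ := hrow j0
    have h1 : (Ar.mulVec w) j0 = r * w j0 := by rw [hAw]; rfl
    have h2 : (0:ℝ) < (Ar.mulVec w) j0 := by
      have : (Ar.mulVec w) j0 = ∑ j, Ar j0 j * w j := rfl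
      rw [this]
      have hterm : (0:ℝ) < Ar j0 j1 * w j1 := by
        apply mul_pos _ (hwpos j1)
        simp only [hAr, Matrix.of_apply]
        exact_mod_cast hj1
      apply lt_of_lt_of_le hterm
      apply Finset.single_le_sum (f := fun j => Ar j0 j * w j) _ (Finset.mem_univ j1)
      intro j _
      exact mul_nonneg (hArnonneg j0 j) (hw0 j)
    rw [h1] at h2
    nlinarith [h2, hj0]
  -- the key estimate
  have key : ∀ μ ∈ spectrum ℂ B, ‖μ‖ < r := by
    intro μ hμ
    by_contra hcon
    push_neg at hcon
    -- eigenvector of B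
    have hμ' : Module.End.HasEigenvalue (Matrix.toLin' B) μ := by
      rw [Module.End.hasEigenvalue_iff_mem_spectrum]
      rw [show Matrix.toLin' B = Matrix.toLinAlgEquiv' B from rfl]
      rwa [AlgEquiv.spectrum_eq
        (Matrix.toLinAlgEquiv' : Matrix (Fin n × Fin k) (Fin n × Fin k) ℂ ≃ₐ[ℂ] _) B]
    obtain ⟨v, hv⟩ := hμ'.exists_hasEigenvector
    have hvne : v ≠ 0 := hv.right
    have hveq : B.mulVec v = μ • v := by
      have := hv.apply_eq_smul
      rwa [Matrix.toLin'_apply] at this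
    -- block vectors
    set L : WithLp 2 (Fin k → ℂ) ≃ₗ[ℝ] (Fin k → ℂ) := WithLp.linearEquiv 2 ℝ (Fin k → ℂ) with hL
    set vb : Fin n → EuclideanSpace ℂ (Fin k) := fun j => L.symm (fun a => v (j, a)) with hvb
    set u : Fin n → ℝ := fun j => ‖vb j‖ with hu
    set g : Fin n → (Fin k → ℂ) := fun i => (fun a => ∑ j, (A i j : ℂ) * v (j, a)) with hg
    have hu0 : ∀ j, 0 ≤ u j := fun j => norm_nonneg _
    -- step A1
    have A1 : ∀ i : Fin n, (fun a => μ * v (i, a))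
        = ((ρ (t i) : Matrix (Fin k) (Fin k) ℂ)).mulVec (g i) := by
      intro i
      funext a
      have h1 : (B.mulVec v) (i, a) = μ * v (i, a) := by rw [hveq]; rfl
      rw [← h1]
      show ∑ q : Fin n × Fin k, B (i, a) q * v q = _
      rw [Fintype.sum_prod_type]
      show ∑ j, ∑ b, ((ρ (t i) : Matrix (Fin k) (Fin k) ℂ) a b * (A i j : ℂ)) * v (j, b)
        = ∑ b, (ρ (t i) : Matrix (Fin k) (Fin k) ℂ) a b * g i b
      rw [Finset.sum_comm]
      apply Finset.sum_congr rfl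
      intro b _
      rw [hg]
      show _ = (ρ (t i) : Matrix (Fin k) (Fin k) ℂ) a b * ∑ j, (A i j : ℂ) * v (j, b)
      rw [Finset.mul_sum]
      apply Finset.sum_congr rfl
      intro j _
      ring
    -- step A2 : norms
    have A2 : ∀ i : Fin n, ‖μ‖ * u i = ‖L.symm (g i)‖ := by
      intro i
      have h3 : ‖L.symm (fun a => μ * v (i, a))‖ = ‖μ‖ * u i := by
        have : L.symm (fun a => μ * v (i, a))
            = (WithLp.equiv 2 (Fin k → ℂ)).symm (μ • (fun a => v (i, a))) := rfl
        rw [this, WithLp.equiv_symm_apply, WithLp.toLp_smul, norm_smul]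
        rfl
      rw [← h3, A1 i]
      exact unitary_norm_aux k _ (ρ (t i)).prop (g i)
    -- the sum decomposition
    set F : Fin n → Fin n → EuclideanSpace ℂ (Fin k) :=
      fun i j => (A i j : ℝ) • vb j with hF
    have hgsum : ∀ i, L.symm (g i) = ∑ j, F i j := by
      intro i
      have h1 : g i = ∑ j, (A i j : ℝ) • (fun a => v (j, a)) := by
        funext a
        rw [Finset.sum_apply]
        apply Finset.sum_congr rfl
        intro j _
        show (A i j : ℂ) * v (j, a) = ((A i j : ℝ) • fun a => v (j, a)) a
        show (A i j : ℂ) * v (j, a) = (A i j : ℝ) • v (j, a)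
        rw [Complex.real_smul]
        norm_num
      rw [h1, map_sum]
      apply Finset.sum_congr rfl
      intro j _
      rw [map_smul]
    have hFnorm : ∀ i j, ‖F i j‖ = (A i j : ℝ) * u j := by
      intro i j
      rw [hF]
      show ‖(A i j : ℝ) • vb j‖ = _
      rw [norm_smul, Real.norm_of_nonneg (by positivity)]
    -- subinvariance
    have hsub : ∀ i, ‖μ‖ * u i ≤ ∑ j, (A i j : ℝ) * u j := by
      intro i
      rw [A2 i, hgsum i]
      calc ‖∑ j, F i j‖ ≤ ∑ j, ‖F i j‖ := norm_sum_le _ _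
        _ = ∑ j, (A i j : ℝ) * u j := by
            apply Finset.sum_congr rfl
            intro j _
            exact hFnorm i j
    -- positive pairing
    set S : ℝ := ∑ i, w i * u i with hS
    obtain ⟨jv, bv, hjv⟩ : ∃ jv bv, v (jv, bv) ≠ 0 := by
      by_contra hc
      push_neg at hc
      exact hvne (funext fun p => hc p.1 p.2)
    have hubjv : 0 < u jv := by
      rw [hu]
      simp only [norm_pos_iff]
      intro hzero
      apply hjv
      have := congrArg L hzero
      rw [LinearEquiv.apply_symm_apply] at this
      rw [map_zero] at this
      exact congrFun this bv
    have hSpos : 0 < S := by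
      rw [hS]
      have : 0 < w jv * u jv := mul_pos (hwpos jv) hubjv
      apply lt_of_lt_of_le this
      apply Finset.single_le_sum (f := fun i => w i * u i) _ (Finset.mem_univ jv)
      intro i _
      exact mul_nonneg (hw0 i) (hu0 i)
    -- the pairing identity
    have hcol : ∀ j, ∑ i, (A i j : ℝ) * w i = r * w j := by
      intro j
      have h1 : (Ar.mulVec w) j = r * w j := by rw [hAw]; rfl
      rw [← h1]
      show ∑ i, (A i j : ℝ) * w i = ∑ i, Ar j i * w i
      apply Finset.sum_congr rfl
      intro i _
      congr 1
      show ((A i j : ℕ) : ℝ) = ((A j i : ℕ) : ℝ)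
      exact_mod_cast hsymm i j
    have hpair : ∑ i, w i * (∑ j, (A i j : ℝ) * u j) = r * S := by
      calc ∑ i, w i * (∑ j, (A i j : ℝ) * u j)
          = ∑ i, ∑ j, w i * ((A i j : ℝ) * u j) := by
            apply Finset.sum_congr rfl
            intro i _
            rw [Finset.mul_sum]
        _ = ∑ j, ∑ i, w i * ((A i j : ℝ) * u j) := Finset.sum_comm
        _ = ∑ j, (∑ i, (A i j : ℝ) * w i) * u j := by
            apply Finset.sum_congr rfl
            intro j _
            rw [Finset.sum_mul]
            apply Finset.sum_congr rfl
            intro i _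
            ring
        _ = ∑ j, (r * w j) * u j := by
            apply Finset.sum_congr rfl
            intro j _
            rw [hcol j]
        _ = r * S := by
            rw [hS, Finset.mul_sum]
            apply Finset.sum_congr rfl
            intro j _
            ring
    have hmuS : ‖μ‖ * S ≤ r * S := by
      rw [← hpair, hS, Finset.mul_sum]
      apply Finset.sum_le_sum
      intro i _
      calc ‖μ‖ * (w i * u i) = w i * (‖μ‖ * u i) := by ring
        _ ≤ w i * (∑ j, (A i j : ℝ) * u j) :=
            mul_le_mul_of_nonneg_left (hsub i) (hw0 i)
    have hμr : ‖μ‖ = r := by nlinarith [hmuS, hSpos, hcon]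
    -- equality in the subinvariance
    have heq : ∀ i, ∑ j, (A i j : ℝ) * u j = r * u i := by
      have hsum0 : ∑ i, w i * ((∑ j, (A i j : ℝ) * u j) - r * u i) = 0 := by
        have hexp : ∑ i, w i * ((∑ j, (A i j : ℝ) * u j) - r * u i)
            = (∑ i, w i * (∑ j, (A i j : ℝ) * u j)) - r * S := by
          rw [hS, Finset.mul_sum, ← Finset.sum_sub_distrib]
          apply Finset.sum_congr rfl
          intro i _
          ring
        rw [hexp, hpair, sub_self]
      have hterm : ∀ i ∈ Finset.univ, 0 ≤ w i * ((∑ j, (A i j : ℝ) * u j) - r * u i) := by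
        intro i _
        apply mul_nonneg (hw0 i)
        rw [sub_nonneg, ← hμr]
        exact hsub i
      have := (Finset.sum_eq_zero_iff_of_nonneg hterm).mp hsum0
      intro i
      have h := this i (Finset.mem_univ i)
      rcases mul_eq_zero.mp h with h' | h'
      · exact absurd h' (hwpos i).ne'
      · linarith [sub_eq_zero.mp h']
    -- u is an eigenvector, positive everywhere
    have hAu : Ar.mulVec u = r • u := by
      funext i
      show ∑ j, Ar i j * u j = r * u i
      rw [← heq i]
      rfl
    have hAus : ∀ s : ℕ, (Ar ^ s).mulVec u = (r ^ s) • u := by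
      intro s
      induction s with
      | zero => simp
      | succ s ih =>
        rw [pow_succ, ← Matrix.mulVec_mulVec, hAu, Matrix.mulVec_smul, ih, pow_succ,
          smul_smul, mul_comm]
    have hupos : ∀ i, 0 < u i := by
      intro i
      have h1 : ((Ar ^ m).mulVec u) i = r ^ m * u i := by rw [hAus]; rfl
      have h2 : (0:ℝ) < ((Ar ^ m).mulVec u) i := by
        have : ((Ar ^ m).mulVec u) i = ∑ j, (Ar ^ m) i j * u j := rfl
        rw [this]
        have hterm : (0:ℝ) < (Ar ^ m) i jv * u jv := by
          apply mul_pos _ hubjv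
          rw [hArpow]
          simp only [Matrix.of_apply]
          exact_mod_cast hmpos i jv
        apply lt_of_lt_of_le hterm
        apply Finset.single_le_sum (f := fun j => (Ar ^ m) i j * u j) _ (Finset.mem_univ jv)
        intro j _
        apply mul_nonneg _ (hu0 j)
        rw [hArpow]
        simp only [Matrix.of_apply]
        positivity
      rcases lt_or_eq_of_le (hu0 i) with h | h
      · exact h
      · exfalso; rw [h1, ← h] at h2; simp at h2
    have hvbne : ∀ j, vb j ≠ 0 := by
      intro j h
      have := hupos j
      rw [hu] at this
      simp only [h, norm_zero] at this
      exact lt_irrefl 0 this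
    -- triangle equality
    have htri : ∀ i, ‖∑ j, F i j‖ = ∑ j, ‖F i j‖ := by
      intro i
      rw [← hgsum i, ← A2 i, hμr]
      rw [← heq i]
      apply Finset.sum_congr rfl
      intro j _
      exact (hFnorm i j).symm
    -- pairwise same-ray along edges
    have hstep : ∀ i j j', 0 < A i j → 0 < A i j' → SameRay ℝ (vb j) (vb j') := by
      intro i j j' hj hj'
      have h1 := sameRay_of_sum_aux (F i) (htri i) j j'
      rw [hF] at h1
      have haj : (0:ℝ) < (A i j : ℝ) := by exact_mod_cast hj
      have haj' : (0:ℝ) < (A i j' : ℝ) := by exact_mod_cast hj'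
      have hne1 : (A i j : ℝ) • vb j ≠ 0 := smul_ne_zero haj.ne' (hvbne j)
      have hne2 : (A i j' : ℝ) • vb j' ≠ 0 := smul_ne_zero haj'.ne' (hvbne j')
      obtain ⟨c, hc, hce⟩ := h1.exists_pos_left hne1 hne2
      have hkey : ((A i j' : ℝ)⁻¹ * (c * (A i j : ℝ))) • vb j = vb j' := by
        rw [← smul_smul, ← smul_smul, hce, smul_smul, inv_mul_cancel₀ haj'.ne', one_smul]
      rw [← hkey]
      exact SameRay.sameRay_pos_smul_right (vb j) (by positivity)
    -- connectivity: all the vb j are pairwise on the same ray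
    have hchain : ∀ s : ℕ, ∀ j j' : Fin n,
        0 < ((Matrix.of A) ^ (2 * s)) j j' → SameRay ℝ (vb j) (vb j') := by
      intro s
      induction s with
      | zero =>
        intro j j' h
        rw [Nat.mul_zero, pow_zero] at h
        by_cases hjj : j = j'
        · subst hjj; exact SameRay.rfl
        · rw [Matrix.one_apply_ne hjj] at h; exact absurd h (lt_irrefl 0)
      | succ s ih =>
        intro j j' h
        have hrw : (Matrix.of A) ^ (2 * (s+1)) = (Matrix.of A) ^ (2*s) * (Matrix.of A) ^ 2 := by
          rw [← pow_add, show 2*s + 2 = 2*(s+1) from by omega]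
        rw [hrw, Matrix.mul_apply] at h
        obtain ⟨p, hp⟩ : ∃ p, 0 < ((Matrix.of A) ^ (2*s)) j p * ((Matrix.of A) ^ 2) p j' := by
          by_contra hc
          push_neg at hc
          have : ∑ p, ((Matrix.of A) ^ (2*s)) j p * ((Matrix.of A) ^ 2) p j' = 0 :=
            Finset.sum_eq_zero fun p _ => Nat.le_zero.mp (hc p)
          omega
        have hp1 : 0 < ((Matrix.of A) ^ (2*s)) j p := by
          rcases Nat.eq_zero_or_pos (((Matrix.of A) ^ (2*s)) j p) with h' | h'
          · rw [h'] at hp; simp at hp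
          · exact h'
        have hp2 : 0 < ((Matrix.of A) ^ 2) p j' := by
          rcases Nat.eq_zero_or_pos (((Matrix.of A) ^ 2) p j') with h' | h'
          · rw [h'] at hp; simp at hp
          · exact h'
        rw [pow_two, Matrix.mul_apply] at hp2
        obtain ⟨i, hi⟩ : ∃ i, 0 < (Matrix.of A) p i * (Matrix.of A) i j' := by
          by_contra hc
          push_neg at hc
          have : ∑ i, (Matrix.of A) p i * (Matrix.of A) i j' = 0 :=
            Finset.sum_eq_zero fun i _ => Nat.le_zero.mp (hc i)
          omega
        have hpi : 0 < A p i := by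
          rcases Nat.eq_zero_or_pos (A p i) with h' | h'
          · rw [show (Matrix.of A) p i = A p i from rfl, h'] at hi; simp at hi
          · exact h'
        have hij' : 0 < A i j' := by
          rcases Nat.eq_zero_or_pos (A i j') with h' | h'
          · rw [show (Matrix.of A) i j' = A i j' from rfl, h'] at hi; simp at hi
          · exact h'
        have hip : 0 < A i p := by rw [hsymm i p]; exact hpi
        exact (ih j p hp1).trans (hstep i p j' hip hij') (fun h => absurd h (hvbne p))
    have hconn : ∀ j j' : Fin n, SameRay ℝ (vb j) (vb j') := by
      intro j j'
      apply hchain m j j'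
      rw [two_mul, pow_add, Matrix.mul_apply]
      have : 0 < ((Matrix.of A) ^ m) j j0 * ((Matrix.of A) ^ m) j0 j' :=
        Nat.mul_pos (hmpos j j0) (hmpos j0 j')
      apply lt_of_lt_of_le this
      apply Finset.single_le_sum
        (f := fun p => ((Matrix.of A) ^ m) j p * ((Matrix.of A) ^ m) p j') _ (Finset.mem_univ j0)
      intro p _
      exact Nat.zero_le _
    -- all blocks are positive multiples of e := v (j0, ·)
    set e : Fin k → ℂ := fun a => v (j0, a) with he
    have hene : e ≠ 0 := by
      intro h
      apply hvbne j0
      show L.symm (fun a => v (j0, a)) = 0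
      rw [show (fun a => v (j0, a)) = e from rfl, h, map_zero]
    have hc2 : ∀ j, ∃ c : ℝ, 0 < c ∧ c • vb j0 = vb j :=
      fun j => (hconn j0 j).exists_pos_left (hvbne j0) (hvbne j)
    choose cv hcv0 hvbc' using hc2
    have hvbc : ∀ j, vb j = cv j • vb j0 := fun j => (hvbc' j).symm
    have hcve : ∀ j, (fun a => v (j, a)) = fun a => ((cv j : ℝ):ℂ) * e a := by
      intro j
      have h2 := congrArg L (hvbc' j)
      rw [map_smul, LinearEquiv.apply_symm_apply, LinearEquiv.apply_symm_apply] at h2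
      funext a
      rw [← congrFun h2 a]
      show cv j • v (j0, a) = ((cv j : ℝ):ℂ) * e a
      rw [Complex.real_smul]
    have hcu : ∀ j, u j = cv j * u j0 := by
      intro j
      have h7 : ‖vb j‖ = ‖cv j • vb j0‖ := congrArg norm (hvbc j)
      simp only [hu]
      rw [h7, norm_smul, Real.norm_of_nonneg (hcv0 j).le]
    have hKr : ∀ i, ∑ j, (A i j : ℝ) * cv j = r * cv i := by
      intro i
      have h1 := heq i
      have h2 : ∑ j, (A i j : ℝ) * u j = (∑ j, (A i j : ℝ) * cv j) * u j0 := by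
        rw [Finset.sum_mul]
        apply Finset.sum_congr rfl
        intro j _
        rw [hcu j]
        ring
      have h3 : r * u i = (r * cv i) * u j0 := by rw [hcu i]; ring
      rw [h2, h3] at h1
      exact mul_right_cancel₀ (hupos j0).ne' h1
    -- e is a common eigenvector of the ρ (t i)
    set ν : ℂ := μ / (r : ℂ) with hν
    have hμne : μ ≠ 0 := by
      intro h
      rw [h, norm_zero] at hμr
      exact hrpos.ne' hμr.symm
    have hrne : ((r:ℝ):ℂ) ≠ 0 := by
      simp only [ne_eq, Complex.ofReal_eq_zero]
      exact hrpos.ne'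
    have hνne : ν ≠ 0 := div_ne_zero hμne hrne
    have hρe : ∀ i, ((ρ (t i) : Matrix (Fin k) (Fin k) ℂ)).mulVec e = ν • e := by
      intro i
      have hA1 := A1 i
      have hgi : g i = (((r * cv i : ℝ)) : ℂ) • e := by
        funext a
        show ∑ j, (A i j : ℂ) * v (j, a) = ((r * cv i : ℝ) : ℂ) * e a
        have hsum : ∑ j, (A i j : ℂ) * v (j, a)
            = ∑ j, (((A i j : ℝ) * cv j : ℝ) : ℂ) * e a := by
          apply Finset.sum_congr rfl
          intro j _
          rw [congrFun (hcve j) a]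
          push_cast
          ring
        rw [hsum, ← Finset.sum_mul]
        congr 1
        rw [← Complex.ofReal_sum]
        rw [hKr i]
      have hlhs : (fun a => μ * v (i, a)) = (μ * ((cv i : ℝ) : ℂ)) • e := by
        funext a
        show μ * v (i, a) = (μ * ((cv i : ℝ):ℂ)) * e a
        rw [congrFun (hcve i) a]
        ring
      rw [hgi, Matrix.mulVec_smul, hlhs] at hA1
      have hcoef : ((r * cv i : ℝ) : ℂ) ≠ 0 := by
        simp only [ne_eq, Complex.ofReal_eq_zero]
        exact (mul_pos hrpos (hcv0 i)).ne'
      have h4 := congrArg (fun x => (((r * cv i : ℝ) : ℂ))⁻¹ • x) hA1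
      simp only [smul_smul] at h4
      rw [inv_mul_cancel₀ hcoef, one_smul] at h4
      rw [← h4]
      have hcvne : ((cv i : ℝ) : ℂ) ≠ 0 := by
        simp only [ne_eq, Complex.ofReal_eq_zero]
        exact (hcv0 i).ne'
      congr 1
      simp only [hν]
      push_cast
      field_simp
    -- every group element scales e
    have hHall : ∀ γ : Γ, ∃ c : ℂ, c ≠ 0 ∧
        ((ρ γ : Matrix (Fin k) (Fin k) ℂ)).mulVec e = c • e := by
      intro γ
      have hγtop : γ ∈ Subgroup.closure (Set.range t) := by rw [hgen]; trivial
      induction hγtop using Subgroup.closure_induction with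
      | mem x hx =>
        obtain ⟨i, rfl⟩ := hx
        exact ⟨ν, hνne, hρe i⟩
      | one =>
        refine ⟨1, one_ne_zero, ?_⟩
        rw [map_one]
        show ((1 : Matrix.unitaryGroup (Fin k) ℂ) : Matrix (Fin k) (Fin k) ℂ).mulVec e = (1:ℂ) • e
        rw [OneMemClass.coe_one, Matrix.one_mulVec, one_smul]
      | mul x y hx hy hpx hpy =>
        obtain ⟨c, hcne, hcs⟩ := hpx
        obtain ⟨d, hdne, hds⟩ := hpy
        refine ⟨c * d, mul_ne_zero hcne hdne, ?_⟩
        rw [map_mul]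
        show ((ρ x * ρ y : Matrix.unitaryGroup (Fin k) ℂ) : Matrix (Fin k) (Fin k) ℂ).mulVec e
          = (c * d) • e
        rw [MulMemClass.coe_mul, ← Matrix.mulVec_mulVec, hds, Matrix.mulVec_smul, hcs,
          smul_smul, mul_comm]
      | inv x hx hpx =>
        obtain ⟨c, hcne, hcs⟩ := hpx
        refine ⟨c⁻¹, inv_ne_zero hcne, ?_⟩
        have h1 : ((ρ x⁻¹ : Matrix (Fin k) (Fin k) ℂ)).mulVec
            (((ρ x : Matrix (Fin k) (Fin k) ℂ)).mulVec e) = e := by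
          rw [Matrix.mulVec_mulVec, ← MulMemClass.coe_mul, ← map_mul, inv_mul_cancel,
            map_one, OneMemClass.coe_one, Matrix.one_mulVec]
        rw [hcs, Matrix.mulVec_smul] at h1
        have h2 := congrArg (fun x => c⁻¹ • x) h1
        simp only [smul_smul, inv_mul_cancel₀ hcne, one_smul] at h2
        exact h2
    -- the span of e is invariant, hence everything by irreducibility
    have hWtop : Submodule.span ℂ {e} = ⊤ := by
      have hinv : ∀ γ : Γ, ∀ x ∈ Submodule.span ℂ {e},
          ((ρ γ : Matrix (Fin k) (Fin k) ℂ)).mulVec x ∈ Submodule.span ℂ {e} := by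
        intro γ x hx
        obtain ⟨a, rfl⟩ := Submodule.mem_span_singleton.mp hx
        obtain ⟨c, hcne, hcs⟩ := hHall γ
        rw [Matrix.mulVec_smul, hcs]
        exact Submodule.smul_mem _ _ (Submodule.smul_mem _ _
          (Submodule.mem_span_singleton_self e))
      rcases hirr (Submodule.span ℂ {e}) hinv with hbot | htop
      · exfalso
        have h5 : e ∈ Submodule.span ℂ {e} := Submodule.mem_span_singleton_self e
        rw [hbot] at h5
        exact hene ((Submodule.mem_bot ℂ).mp h5)
      · exact htop
    -- uniqueness of the scalar
    have huniq : ∀ c c' : ℂ, c • e = c' • e → c = c' := by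
      intro c c' hcc
      have h0 : (c - c') • e = 0 := by rw [sub_smul, hcc, sub_self]
      rcases smul_eq_zero.mp h0 with h | h
      · exact sub_eq_zero.mp h
      · exact absurd h hene
    choose cf hcf using hHall
    have hcmul : ∀ γ δ : Γ, cf (γ * δ) = cf γ * cf δ := by
      intro γ δ
      apply huniq
      rw [← (hcf (γ * δ)).2, map_mul]
      show ((ρ γ * ρ δ : Matrix.unitaryGroup (Fin k) ℂ) : Matrix (Fin k) (Fin k) ℂ).mulVec e
        = (cf γ * cf δ) • e
      rw [MulMemClass.coe_mul, ← Matrix.mulVec_mulVec, (hcf δ).2, Matrix.mulVec_smul,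
        (hcf γ).2, smul_smul, mul_comm]
    set χ : Γ →* ℂˣ := MonoidHom.mk' (fun γ => Units.mk0 (cf γ) (hcf γ).1)
      (by
        intro a b
        ext
        simp only [Units.val_mul, Units.val_mk0]
        exact hcmul a b) with hχ
    obtain ⟨γ0, hγ0⟩ := hnontriv
    have hχne : χ γ0 ≠ 1 := by
      intro hone
      apply hγ0
      have hcf1 : cf γ0 = 1 := congrArg Units.val hone
      have hfix : ((ρ γ0 : Matrix (Fin k) (Fin k) ℂ)).mulVec e = e := by
        rw [(hcf γ0).2, hcf1, one_smul]
      have hfixall : ∀ x : Fin k → ℂ, ((ρ γ0 : Matrix (Fin k) (Fin k) ℂ)).mulVec x = x := by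
        intro x
        have hx : x ∈ Submodule.span ℂ {e} := by rw [hWtop]; trivial
        obtain ⟨a, rfl⟩ := Submodule.mem_span_singleton.mp hx
        rw [Matrix.mulVec_smul, hfix]
      have hmat : (ρ γ0 : Matrix (Fin k) (Fin k) ℂ) = 1 := by
        ext a b
        have h6 := congrFun (hfixall (Pi.single b 1)) a
        rw [Matrix.mulVec_single] at h6
        change (ρ γ0 : Matrix (Fin k) (Fin k) ℂ) a b * 1 = _ at h6
        simp only [mul_one] at h6
        rw [h6]
        simp [Matrix.one_apply, Pi.single_apply, eq_comm]
      exact Subtype.ext hmat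
    obtain ⟨i1, i2, h12⟩ := hchi χ ⟨γ0, hχne⟩
    apply h12
    ext
    show cf (t i1) = cf (t i2)
    have e1 : cf (t i1) = ν := huniq _ _ (by rw [← (hcf (t i1)).2]; exact hρe i1)
    have e2 : cf (t i2) = ν := huniq _ _ (by rw [← (hcf (t i2)).2]; exact hρe i2)
    rw [e1, e2]
  -- r is in the spectrum of M
  have hrspec : (r : ℂ) ∈ spectrum ℂ M := by
    set wc : Fin n → ℂ := fun i => (w i : ℂ) with hwc
    have hwcne : wc ≠ 0 := by
      intro h
      have := congrFun h j0
      simp only [hwc, Pi.zero_apply, Complex.ofReal_eq_zero] at this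
      exact hj0.ne' this
    have heig : M.mulVec wc = (r : ℂ) • wc := by
      funext i
      have hre : (Ar.mulVec w) i = r * w i := by rw [hAw]; rfl
      have : (Ar.mulVec w) i = ∑ j, (A i j : ℝ) * w j := rfl
      rw [this] at hre
      show ∑ j, (A i j : ℂ) * wc j = (r : ℂ) * wc i
      simp only [hwc]
      push_cast
      exact_mod_cast congrArg (fun x : ℝ => (x : ℂ)) hre
    rw [← AlgEquiv.spectrum_eq
      (Matrix.toLinAlgEquiv' : Matrix (Fin n) (Fin n) ℂ ≃ₐ[ℂ] _) M,
      ← Module.End.hasEigenvalue_iff_mem_spectrum]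
    apply Module.End.hasEigenvalue_of_hasEigenvector (x := wc)
    refine ⟨Module.End.mem_eigenspace_iff.mpr ?_, hwcne⟩
    show Matrix.toLin' M wc = (r : ℂ) • wc
    rw [Matrix.toLin'_apply, heig]
  -- assemble
  have h2 : ENNReal.ofReal r ≤ spectralRadius ℂ M := by
    have hle : (‖((r : ℝ) : ℂ)‖₊ : ENNReal) ≤ spectralRadius ℂ M := by
      unfold spectralRadius
      exact le_iSup₂ (f := fun (μ : ℂ) (_ : μ ∈ spectrum ℂ M) => ((‖μ‖₊ : NNReal) : ENNReal)) ((r : ℝ) : ℂ) hrspec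
    refine le_trans (le_of_eq ?_) hle
    rw [← enorm_eq_nnnorm, ← ofReal_norm]
    congr 1
    simp [Complex.norm_real, abs_of_pos hrpos]
  have h1 : spectralRadius ℂ B < ENNReal.ofReal r := by
    rcases Set.eq_empty_or_nonempty (spectrum ℂ B) with he | hne
    · unfold spectralRadius
      rw [he]
      simp only [Set.mem_empty_iff_false, iSup_false, iSup_bot]
      simpa using ENNReal.ofReal_pos.mpr hrpos
    · have hfin : (spectrum ℂ B).Finite := Matrix.finite_spectrum B
      have hnefin : hfin.toFinset.Nonempty := by
        rwa [Set.Finite.toFinset_nonempty]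
      set s : ℝ := hfin.toFinset.sup' hnefin (fun μ => ‖μ‖) with hs
      have hsr : s < r := by
        rw [hs, Finset.sup'_lt_iff]
        intro μ hμ
        exact key μ (hfin.mem_toFinset.mp hμ)
      have hub : ∀ μ ∈ spectrum ℂ B, ‖μ‖ ≤ s :=
        fun μ hμ => Finset.le_sup' _ (hfin.mem_toFinset.mpr hμ)
      calc spectralRadius ℂ B ≤ ENNReal.ofReal s := by
            unfold spectralRadius
            apply iSup₂_le
            intro μ hμ
            rw [← enorm_eq_nnnorm, ← ofReal_norm]
            exact ENNReal.ofReal_le_ofReal (hub μ hμ)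
        _ < ENNReal.ofReal r := by
            rw [ENNReal.ofReal_lt_ofReal_iff hrpos]
            exact hsr
  exact lt_of_lt_of_le h1 h2
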